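/- Let Q be a finite poset such that min(di(x;Q), 1 − di(x;Q)) < 1/3 for every x ∈ Q (i.e. bi(Q) < 1/3). If x is maximal among those elements of Q with di(x;Q) > 2/3, then x is covered by at least two elements of Q; dually, if y is minimal among those elements of Q with di(y;Q) < 1/3, then y covers at least two elements of Q. -/

import Mathlib

/-- `di(x;Q)`: the fraction of order ideals (lower sets) of the poset `Q` that contain
the element `x`. -/
noncomputable def di (Q : Type*) [PartialOrder Q] (x : Q) : ℝ :=
  (Nat.card {I : Set Q // IsLowerSet I ∧ x ∈ I} : ℝ) /
    (Nat.card {I : Set Q // IsLowerSet I} : ℝ)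

section Aux

open OrderDual

variable {Q : Type*} [PartialOrder Q] [Fintype Q]

private lemma di_eq (x : Q) :
    di Q x = (({I : Set Q | IsLowerSet I ∧ x ∈ I}).ncard : ℝ) /
      (({I : Set Q | IsLowerSet I}).ncard : ℝ) := by
  rw [di, ← Nat.card_coe_set_eq, ← Nat.card_coe_set_eq]
  rfl

private lemma split_card (p : Set Q → Prop) (x : Q) :
    ({I : Set Q | p I}).ncard
      = ({I : Set Q | p I ∧ x ∈ I}).ncard + ({I : Set Q | p I ∧ x ∉ I}).ncard := by
  rw [← Set.ncard_union_eq ?_ (Set.toFinite _) (Set.toFinite _)]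
  · congr 1
    ext I
    by_cases hx : x ∈ I <;> simp [hx]
  · rw [Set.disjoint_left]
    rintro I ⟨-, hI⟩ ⟨-, h'⟩
    exact h' hI

private lemma N_pos : 0 < ({I : Set Q | IsLowerSet I}).ncard := by
  rw [Set.ncard_pos (Set.toFinite _)]
  exact ⟨∅, fun a b _ hb => hb.elim⟩

private lemma diff_inj {x : Q} {I J : Set Q} (hI : x ∈ I) (hJ : x ∈ J)
    (h : I \ {x} = J \ {x}) : I = J := by
  ext w
  by_cases hw : w = x
  · subst hw; simp [hI, hJ]
  · constructor
    · intro hwI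
      have hm : w ∈ J \ {x} := h ▸ (⟨hwI, hw⟩ : w ∈ I \ {x})
      exact hm.1
    · intro hwJ
      have hm : w ∈ I \ {x} := h.symm ▸ (⟨hwJ, hw⟩ : w ∈ J \ {x})
      exact hm.1

/-- Main counting lemma: the first half of the statement. -/
private lemma main_half
    (h : ∀ x : Q, min (di Q x) (1 - di Q x) < 1 / 3)
    (x : Q) (hx : 2 / 3 < di Q x)
    (hmax : ∀ z : Q, 2 / 3 < di Q z → x ≤ z → z = x) :
    ∃ a b : Q, a ≠ b ∧ x ⋖ a ∧ x ⋖ b := by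
  haveI : IsStronglyAtomic Q := IsStronglyAtomic.of_wellFounded_lt wellFounded_lt
  by_contra hc
  push_neg at hc
  have hn : (0 : ℝ) < (({I : Set Q | IsLowerSet I}).ncard : ℝ) := by
    exact_mod_cast N_pos (Q := Q)
  have hsplit : (({I : Set Q | IsLowerSet I}).ncard : ℝ)
      = (({I : Set Q | IsLowerSet I ∧ x ∈ I}).ncard : ℝ)
        + (({I : Set Q | IsLowerSet I ∧ x ∉ I}).ncard : ℝ) := by
    exact_mod_cast congrArg (Nat.cast (R := ℝ)) (split_card IsLowerSet x)
  have hxA : 2 / 3 * (({I : Set Q | IsLowerSet I}).ncard : ℝ)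
      < (({I : Set Q | IsLowerSet I ∧ x ∈ I}).ncard : ℝ) := by
    rw [di_eq, lt_div_iff₀ hn] at hx
    linarith
  have hBx : (({I : Set Q | IsLowerSet I ∧ x ∉ I}).ncard : ℝ)
      < 1 / 3 * (({I : Set Q | IsLowerSet I}).ncard : ℝ) := by
    linarith
  by_cases hcov : ∃ a : Q, x ⋖ a
  · obtain ⟨a, ha⟩ := hcov
    have key : ∀ y : Q, x < y → a ≤ y := by
      intro y hy
      obtain ⟨z, hz, hzy⟩ := exists_covBy_le_of_lt hy
      have hza : z = a := by
        by_contra hne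
        exact hc a z (fun e => hne e.symm) ha hz
      exact hza ▸ hzy
    have hax : a ≠ x := ha.lt.ne'
    have hda : di Q a < 1 / 3 := by
      have h23 : ¬ (2 / 3 < di Q a) := fun h' => hax (hmax a h' ha.lt.le)
      rcases min_lt_iff.1 (h a) with h' | h'
      · exact h'
      · push_neg at h23; linarith
    have hAa : (({I : Set Q | IsLowerSet I ∧ a ∈ I}).ncard : ℝ)
        < 1 / 3 * (({I : Set Q | IsLowerSet I}).ncard : ℝ) := by
      rw [di_eq, div_lt_iff₀ hn] at hda
      linarith
    have hAsplit : ({I : Set Q | IsLowerSet I ∧ x ∈ I}).ncard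
        = ({I : Set Q | (IsLowerSet I ∧ x ∈ I) ∧ a ∈ I}).ncard
          + ({I : Set Q | (IsLowerSet I ∧ x ∈ I) ∧ a ∉ I}).ncard :=
      split_card (fun I => IsLowerSet I ∧ x ∈ I) a
    have hC1 : ({I : Set Q | (IsLowerSet I ∧ x ∈ I) ∧ a ∈ I}).ncard
        ≤ ({I : Set Q | IsLowerSet I ∧ a ∈ I}).ncard := by
      apply Set.ncard_le_ncard _ (Set.toFinite _)
      rintro I ⟨⟨hI, -⟩, haI⟩
      exact ⟨hI, haI⟩
    have hC2 : ({I : Set Q | (IsLowerSet I ∧ x ∈ I) ∧ a ∉ I}).ncard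
        ≤ ({I : Set Q | IsLowerSet I ∧ x ∉ I}).ncard := by
      apply Set.ncard_le_ncard_of_injOn (fun I => I \ {x})
      · rintro I ⟨⟨hI, hxI⟩, haI⟩
        refine ⟨?_, by simp⟩
        intro u v hvu hu
        obtain ⟨huI, hux⟩ := hu
        refine ⟨hI hvu huI, ?_⟩
        intro hv
        have hvx : v = x := hv
        have hxu : x < u := lt_of_le_of_ne (hvx ▸ hvu)
          (fun e => hux (Set.mem_singleton_iff.2 e.symm))
        exact haI (hI (key u hxu) huI)
      · rintro I ⟨⟨-, hxI⟩, -⟩ J ⟨⟨-, hxJ⟩, -⟩ hIJ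
        exact diff_inj hxI hxJ hIJ
    have hAle : (({I : Set Q | IsLowerSet I ∧ x ∈ I}).ncard : ℝ)
        ≤ (({I : Set Q | IsLowerSet I ∧ a ∈ I}).ncard : ℝ)
          + (({I : Set Q | IsLowerSet I ∧ x ∉ I}).ncard : ℝ) := by
      have : ({I : Set Q | IsLowerSet I ∧ x ∈ I}).ncard
          ≤ ({I : Set Q | IsLowerSet I ∧ a ∈ I}).ncard
            + ({I : Set Q | IsLowerSet I ∧ x ∉ I}).ncard := by
        rw [hAsplit]; exact Nat.add_le_add hC1 hC2
      exact_mod_cast this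
    linarith
  · push_neg at hcov
    have hmaxQ : ∀ y : Q, ¬ x < y := by
      intro y hy
      obtain ⟨z, hz, -⟩ := exists_covBy_le_of_lt hy
      exact hcov z hz
    have hAB : ({I : Set Q | IsLowerSet I ∧ x ∈ I}).ncard
        ≤ ({I : Set Q | IsLowerSet I ∧ x ∉ I}).ncard := by
      apply Set.ncard_le_ncard_of_injOn (fun I => I \ {x})
      · rintro I ⟨hI, hxI⟩
        refine ⟨?_, by simp⟩
        intro u v hvu hu
        obtain ⟨huI, hux⟩ := hu
        refine ⟨hI hvu huI, ?_⟩
        intro hv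
        have hvx : v = x := hv
        exact hmaxQ u (lt_of_le_of_ne (hvx ▸ hvu)
          (fun e => hux (Set.mem_singleton_iff.2 e.symm)))
      · rintro I ⟨-, hxI⟩ J ⟨-, hxJ⟩ hIJ
        exact diff_inj hxI hxJ hIJ
    have : (({I : Set Q | IsLowerSet I ∧ x ∈ I}).ncard : ℝ)
        ≤ (({I : Set Q | IsLowerSet I ∧ x ∉ I}).ncard : ℝ) := by exact_mod_cast hAB
    linarith

/-- Duality: `di` of the order dual is `1 - di`. -/
private lemma di_dual (y : Qᵒᵈ) : di Qᵒᵈ y = 1 - di Q (ofDual y) := by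
  classical
  let e : Set Qᵒᵈ ≃ Set Q :=
    { toFun := fun I => (ofDual ⁻¹' I)ᶜ
      invFun := fun J => toDual ⁻¹' Jᶜ
      left_inv := fun I => by
        ext w
        simp only [Set.mem_preimage, Set.mem_compl_iff, not_not]
        exact ⟨fun h => Classical.byContradiction h, fun h h' => h' h⟩
      right_inv := fun J => by
        ext w
        simp only [Set.mem_preimage, Set.mem_compl_iff, not_not]
        exact ⟨fun h => Classical.byContradiction h, fun h h' => h' h⟩ }
  have hlower : ∀ I : Set Qᵒᵈ, IsLowerSet I ↔ IsLowerSet (e I) := by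
    intro I
    show IsLowerSet I ↔ IsLowerSet (ofDual ⁻¹' I)ᶜ
    rw [isLowerSet_compl, isUpperSet_preimage_ofDual_iff]
  have hden : ({I : Set Qᵒᵈ | IsLowerSet I}).ncard = ({J : Set Q | IsLowerSet J}).ncard := by
    rw [← Nat.card_coe_set_eq, ← Nat.card_coe_set_eq]
    exact Nat.card_congr (Equiv.subtypeEquiv e fun I => hlower I)
  have hnum : ({I : Set Qᵒᵈ | IsLowerSet I ∧ y ∈ I}).ncard
      = ({J : Set Q | IsLowerSet J ∧ ofDual y ∉ J}).ncard := by
    rw [← Nat.card_coe_set_eq, ← Nat.card_coe_set_eq]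
    refine Nat.card_congr (Equiv.subtypeEquiv e fun I => ?_)
    constructor
    · rintro ⟨hI, hyI⟩
      refine ⟨(hlower I).1 hI, ?_⟩
      show ¬ (ofDual y ∈ (ofDual ⁻¹' I)ᶜ)
      exact fun h' => h' hyI
    · rintro ⟨hJ, hyJ⟩
      refine ⟨(hlower I).2 hJ, ?_⟩
      by_contra hyI
      exact hyJ (fun h' => hyI h')
  have hn : (0 : ℝ) < (({I : Set Q | IsLowerSet I}).ncard : ℝ) := by
    exact_mod_cast N_pos (Q := Q)
  have hsplit : (({I : Set Q | IsLowerSet I}).ncard : ℝ)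
      = (({I : Set Q | IsLowerSet I ∧ ofDual y ∈ I}).ncard : ℝ)
        + (({I : Set Q | IsLowerSet I ∧ ofDual y ∉ I}).ncard : ℝ) := by
    exact_mod_cast congrArg (Nat.cast (R := ℝ)) (split_card IsLowerSet (ofDual y))
  rw [di_eq (Q := Qᵒᵈ) y, di_eq (ofDual y), hden, hnum]
  rw [eq_sub_iff_add_eq, ← add_div, hsplit]
  rw [add_comm, div_self (by linarith)]

end Aux

/-- Let `Q` be a finite poset with `min(di(x;Q), 1 − di(x;Q)) < 1/3` for
every `x ∈ Q` (i.e. `bi(Q) < 1/3`).  If `x` is maximal among elements with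
`di(x;Q) > 2/3`, then `x` is covered by at least two elements of `Q`; dually, if `y` is
minimal among elements with `di(y;Q) < 1/3`, then `y` covers at least two elements. -/
theorem stmt1 {Q : Type*} [PartialOrder Q] [Fintype Q]
    (h : ∀ x : Q, min (di Q x) (1 - di Q x) < 1 / 3) :
    (∀ x : Q, 2 / 3 < di Q x → (∀ z : Q, 2 / 3 < di Q z → x ≤ z → z = x) →
      ∃ a b : Q, a ≠ b ∧ x ⋖ a ∧ x ⋖ b) ∧
    (∀ y : Q, di Q y < 1 / 3 → (∀ z : Q, di Q z < 1 / 3 → z ≤ y → z = y) →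
      ∃ a b : Q, a ≠ b ∧ a ⋖ y ∧ b ⋖ y) := by
  constructor
  · exact fun x hx hmax => main_half h x hx hmax
  · intro y hy hmin
    have h' : ∀ x : Qᵒᵈ, min (di Qᵒᵈ x) (1 - di Qᵒᵈ x) < 1 / 3 := by
      intro x
      rw [di_dual]
      have hh := h (OrderDual.ofDual x)
      rw [min_comm] at hh
      rw [sub_sub_cancel]
      exact hh
    have hx' : 2 / 3 < di Qᵒᵈ (OrderDual.toDual y) := by
      rw [di_dual]
      simp only [OrderDual.ofDual_toDual]
      linarith
    have hmax' : ∀ z : Qᵒᵈ, 2 / 3 < di Qᵒᵈ z → OrderDual.toDual y ≤ z →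
        z = OrderDual.toDual y := by
      intro z hz hle
      rw [di_dual] at hz
      have h1 : di Q (OrderDual.ofDual z) < 1 / 3 := by linarith
      have h2 : OrderDual.ofDual z ≤ y := hle
      exact congrArg OrderDual.toDual (hmin (OrderDual.ofDual z) h1 h2)
    obtain ⟨a, b, hab, ha, hb⟩ := main_half h' (OrderDual.toDual y) hx' hmax'
    refine ⟨OrderDual.ofDual a, OrderDual.ofDual b,
      fun e => hab (congrArg OrderDual.toDual e), ?_, ?_⟩
    · exact ofDual_covBy_ofDual_iff.2 ha
    · exact ofDual_covBy_ofDual_iff.2 hb
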